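/- Let C be a real symmetric positive definite 2N×2N matrix. Then Γ(C) and −Γ(C) have the same characteristic polynomial; equivalently, the characteristic polynomial of Γ(C) is an even polynomial, so the eigenvalues of Γ(C) occur in pairs ±λ with equal multiplicities. -/

import Mathlib

open Matrix Polynomial

/-- The block matrix `J = [[0, -I],[I, 0]]`. -/
def J (N : ℕ) : Matrix (Fin N ⊕ Fin N) (Fin N ⊕ Fin N) ℝ :=
  Matrix.fromBlocks 0 (-1) 1 0

/-- The proper part `Ċ` of a real `2N × 2N` matrix `C` with blocks `[[A, B],[B′, D]]`:
`Ċ = (1/2)·[[A+D, B−B′],[B′−B, A+D]]`. -/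
noncomputable def dotPart {N : ℕ} (C : Matrix (Fin N ⊕ Fin N) (Fin N ⊕ Fin N) ℝ) :
    Matrix (Fin N ⊕ Fin N) (Fin N ⊕ Fin N) ℝ :=
  (1/2 : ℝ) • Matrix.fromBlocks (C.toBlocks₁₁ + C.toBlocks₂₂) (C.toBlocks₁₂ - C.toBlocks₂₁)
    (C.toBlocks₂₁ - C.toBlocks₁₂) (C.toBlocks₁₁ + C.toBlocks₂₂)

/-- The improper part `C̈ = C − Ċ`. -/
noncomputable def ddotPart {N : ℕ} (C : Matrix (Fin N ⊕ Fin N) (Fin N ⊕ Fin N) ℝ) :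
    Matrix (Fin N ⊕ Fin N) (Fin N ⊕ Fin N) ℝ :=
  C - dotPart C

/-- The square root of a positive semidefinite matrix, as `Matrix.PosSemidef.sqrt` was defined
in the older Mathlib (since removed). -/
noncomputable def Matrix.PosSemidef.sqrt {n : Type*} [Fintype n] [DecidableEq n]
    {A : Matrix n n ℝ} (hA : A.PosSemidef) : Matrix n n ℝ :=
  (hA.1.eigenvectorUnitary : Matrix n n ℝ) * diagonal (Real.sqrt ∘ hA.1.eigenvalues) *
    (star hA.1.eigenvectorUnitary : Matrix n n ℝ)

/-- `Γ(C) = Ċ^{-1/2} C̈ Ċ^{-1/2}`, where `Ċ^{1/2}` is the (unique) positive semidefinite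
(hence, as `Ċ` is positive definite, the unique symmetric positive definite) square root
of `Ċ`, given a proof `h` that `Ċ` is positive definite. -/
noncomputable def Gamma {N : ℕ} (C : Matrix (Fin N ⊕ Fin N) (Fin N ⊕ Fin N) ℝ)
    (h : (dotPart C).PosDef) : Matrix (Fin N ⊕ Fin N) (Fin N ⊕ Fin N) ℝ :=
  (h.posSemidef.sqrt)⁻¹ * ddotPart C * (h.posSemidef.sqrt)⁻¹
section aux
open Matrix

namespace Matrix.PosSemidef

open scoped MatrixOrder

variable {n : Type*} [Fintype n] [DecidableEq n]

lemma sqrt_eq_cfcSqrt {A : Matrix n n ℝ} (hA : A.PosSemidef) : hA.sqrt = CFC.sqrt A := by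
  rw [CFC.sqrt_eq_cfc, cfc_nnreal_eq_real _ A, hA.1.cfc_eq]
  simp only [IsHermitian.cfc, Matrix.PosSemidef.sqrt, Unitary.conjStarAlgAut_apply]
  congr 3
  funext i
  simp [hA.eigenvalues_nonneg i]

lemma posSemidef_sqrt {A : Matrix n n ℝ} (hA : A.PosSemidef) : hA.sqrt.PosSemidef := by
  rw [sqrt_eq_cfcSqrt]
  exact (CFC.sqrt_nonneg A).posSemidef

lemma sqrt_mul_self {A : Matrix n n ℝ} (hA : A.PosSemidef) : hA.sqrt * hA.sqrt = A := by
  rw [sqrt_eq_cfcSqrt]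
  exact CFC.sqrt_mul_sqrt_self A hA.nonneg

lemma eq_sqrt_of_sq_eq {A B : Matrix n n ℝ} (hB : B.PosSemidef) (hA : A.PosSemidef)
    (h : B ^ 2 = A) : B = hA.sqrt := by
  rw [sqrt_eq_cfcSqrt]
  exact (CFC.sqrt_unique (by rw [← sq, h]) hB.nonneg).symm

end Matrix.PosSemidef

open Matrix

variable {N : ℕ}

lemma Jt_eq_neg (N : ℕ) : (_root_.J N)ᵀ = -(_root_.J N) :=
  Matrix.J_transpose (Fin N) ℝ

lemma J_mul_Jt (N : ℕ) : _root_.J N * (_root_.J N)ᵀ = 1 := by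
  rw [Jt_eq_neg, Matrix.mul_neg, show _root_.J N * _root_.J N = Matrix.J (Fin N) ℝ * Matrix.J (Fin N) ℝ from rfl, Matrix.J_squared, neg_neg]

lemma Jt_mul_J (N : ℕ) : (_root_.J N)ᵀ * _root_.J N = 1 := by
  rw [Jt_eq_neg, Matrix.neg_mul, show _root_.J N * _root_.J N = Matrix.J (Fin N) ℝ * Matrix.J (Fin N) ℝ from rfl, Matrix.J_squared, neg_neg]

lemma conjJ (P Q R S : Matrix (Fin N) (Fin N) ℝ) :
    _root_.J N * fromBlocks P Q R S * (_root_.J N)ᵀ = fromBlocks S (-R) (-Q) P := by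
  simp [_root_.J, fromBlocks_transpose, fromBlocks_multiply]

lemma conj_dot (C : Matrix (Fin N ⊕ Fin N) (Fin N ⊕ Fin N) ℝ) :
    _root_.J N * dotPart C * (_root_.J N)ᵀ = dotPart C := by
  rw [dotPart, Matrix.mul_smul, Matrix.smul_mul, conjJ]
  congr 1
  rw [neg_sub, neg_sub]

lemma conj_ddot (C : Matrix (Fin N ⊕ Fin N) (Fin N ⊕ Fin N) ℝ) :
    _root_.J N * ddotPart C * (_root_.J N)ᵀ = -(ddotPart C) := by
  have h2 : _root_.J N * C * (_root_.J N)ᵀ + C = dotPart C + dotPart C := by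
    nth_rewrite 1 [← fromBlocks_toBlocks C]
    rw [conjJ, dotPart]
    ext i j
    rcases i with i | i <;> rcases j with j | j <;>
      simp [Matrix.add_apply, Matrix.smul_apply, Matrix.toBlocks₁₁, Matrix.toBlocks₁₂,
        Matrix.toBlocks₂₁, Matrix.toBlocks₂₂, Matrix.neg_apply] <;> ring
  rw [ddotPart, Matrix.mul_sub, Matrix.sub_mul, conj_dot, neg_sub, sub_eq_sub_iff_add_eq_add]
  exact h2

lemma comm_inv {n : Type*} [Fintype n] [DecidableEq n] {s K : Matrix n n ℝ}
    (hu : IsUnit s.det) (h : K * s = s * K) : K * s⁻¹ = s⁻¹ * K := by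
  calc K * s⁻¹ = s⁻¹ * (s * (K * s⁻¹)) := by
        rw [← Matrix.mul_assoc, Matrix.nonsing_inv_mul _ hu, Matrix.one_mul]
    _ = s⁻¹ * (K * (s * s⁻¹)) := by rw [← Matrix.mul_assoc s K, ← h, Matrix.mul_assoc]
    _ = s⁻¹ * K := by rw [Matrix.mul_nonsing_inv _ hu, Matrix.mul_one]

lemma conj_sandwich {n : Type*} [Fintype n] [DecidableEq n] {K s M : Matrix n n ℝ}
    (hK : K * s⁻¹ = s⁻¹ * K) (hKt : s⁻¹ * Kᵀ = Kᵀ * s⁻¹) (hM : K * M * Kᵀ = -M) :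
    K * (s⁻¹ * M * s⁻¹) * Kᵀ = -(s⁻¹ * M * s⁻¹) := by
  calc K * (s⁻¹ * M * s⁻¹) * Kᵀ = K * s⁻¹ * M * (s⁻¹ * Kᵀ) := by
        simp only [Matrix.mul_assoc]
    _ = s⁻¹ * K * M * (Kᵀ * s⁻¹) := by rw [hK, hKt]
    _ = s⁻¹ * (K * M * Kᵀ) * s⁻¹ := by simp only [Matrix.mul_assoc]
    _ = s⁻¹ * (-M) * s⁻¹ := by rw [hM]
    _ = -(s⁻¹ * M * s⁻¹) := by simp

lemma J_comm_sqrt (C : Matrix (Fin N ⊕ Fin N) (Fin N ⊕ Fin N) ℝ)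
    (hd : (dotPart C).PosDef) :
    _root_.J N * hd.posSemidef.sqrt = hd.posSemidef.sqrt * _root_.J N := by
  have hpsd : (_root_.J N * hd.posSemidef.sqrt * (_root_.J N)ᵀ).PosSemidef := by
    have := hd.posSemidef.posSemidef_sqrt.mul_mul_conjTranspose_same (_root_.J N)
    rwa [conjTranspose_eq_transpose_of_trivial] at this
  have hsq : (_root_.J N * hd.posSemidef.sqrt * (_root_.J N)ᵀ) ^ 2 = dotPart C := by
    rw [pow_two]
    calc _root_.J N * hd.posSemidef.sqrt * (_root_.J N)ᵀ *
          (_root_.J N * hd.posSemidef.sqrt * (_root_.J N)ᵀ)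
        = _root_.J N * hd.posSemidef.sqrt * (((_root_.J N)ᵀ * _root_.J N) *
            (hd.posSemidef.sqrt * (_root_.J N)ᵀ)) := by simp only [Matrix.mul_assoc]
      _ = _root_.J N * (hd.posSemidef.sqrt * hd.posSemidef.sqrt) * (_root_.J N)ᵀ := by
            rw [Jt_mul_J, Matrix.one_mul]; simp only [Matrix.mul_assoc]
      _ = dotPart C := by rw [hd.posSemidef.sqrt_mul_self]; exact conj_dot C
  have heq : _root_.J N * hd.posSemidef.sqrt * (_root_.J N)ᵀ = hd.posSemidef.sqrt :=
    hpsd.eq_sqrt_of_sq_eq hd.posSemidef hsq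
  calc _root_.J N * hd.posSemidef.sqrt
      = _root_.J N * hd.posSemidef.sqrt * ((_root_.J N)ᵀ * _root_.J N) := by
        rw [Jt_mul_J, Matrix.mul_one]
    _ = (_root_.J N * hd.posSemidef.sqrt * (_root_.J N)ᵀ) * _root_.J N := by
        simp only [Matrix.mul_assoc]
    _ = hd.posSemidef.sqrt * _root_.J N := by rw [heq]

lemma sqrt_isUnit (C : Matrix (Fin N ⊕ Fin N) (Fin N ⊕ Fin N) ℝ)
    (hd : (dotPart C).PosDef) : IsUnit hd.posSemidef.sqrt.det := by
  have h := hd.posSemidef.sqrt_mul_self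
  have h1 : IsUnit (dotPart C).det := hd.isUnit.map detMonoidHom
  rw [← h, Matrix.det_mul] at h1
  exact (IsUnit.mul_iff.mp h1).1

lemma conj_Gamma (C : Matrix (Fin N ⊕ Fin N) (Fin N ⊕ Fin N) ℝ)
    (hd : (dotPart C).PosDef) :
    _root_.J N * Gamma C hd * (_root_.J N)ᵀ = -(Gamma C hd) := by
  have hK : _root_.J N * (hd.posSemidef.sqrt)⁻¹ = (hd.posSemidef.sqrt)⁻¹ * _root_.J N :=
    comm_inv (sqrt_isUnit C hd) (J_comm_sqrt C hd)
  have hKt : (hd.posSemidef.sqrt)⁻¹ * (_root_.J N)ᵀ = (_root_.J N)ᵀ * (hd.posSemidef.sqrt)⁻¹ := by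
    rw [Jt_eq_neg, Matrix.mul_neg, Matrix.neg_mul, hK]
  exact conj_sandwich hK hKt (conj_ddot C)

lemma charpoly_conj_orth {n : Type*} [Fintype n] [DecidableEq n]
    (P M : Matrix n n ℝ) (h : P * Pᵀ = 1) :
    (P * M * Pᵀ).charpoly = M.charpoly := by
  classical
  have h' : Pᵀ * P = 1 := mul_eq_one_comm.mp h
  let f : Matrix n n ℝ →+* Matrix n n (Polynomial ℝ) :=
    (Polynomial.C : ℝ →+* Polynomial ℝ).mapMatrix
  have hf1 : f P * f Pᵀ = 1 := by rw [← _root_.map_mul, h, _root_.map_one]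
  have hf2 : f Pᵀ * f P = 1 := by rw [← _root_.map_mul, h', _root_.map_one]
  have hscalar : Matrix.scalar n (Polynomial.X : Polynomial ℝ) =
      f P * Matrix.scalar n (Polynomial.X) * f Pᵀ := by
    rw [Matrix.mul_assoc,
      (Matrix.scalar_commute (Polynomial.X : Polynomial ℝ)
        (fun r => Commute.all _ _) (f Pᵀ)).eq, ← Matrix.mul_assoc, hf1, Matrix.one_mul]
  have hcm : Matrix.charmatrix (P * M * Pᵀ) = f P * Matrix.charmatrix M * f Pᵀ := by
    rw [Matrix.charmatrix, Matrix.charmatrix, Matrix.mul_sub, Matrix.sub_mul]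
    rw [← hscalar]
    congr 1
    show f (P * M * Pᵀ) = _
    rw [_root_.map_mul, _root_.map_mul]
  rw [Matrix.charpoly, hcm, Matrix.det_mul, Matrix.det_mul, mul_comm, ← Matrix.charpoly,
    ← mul_assoc, ← Matrix.det_mul, hf2, Matrix.det_one, one_mul]

end aux

theorem statement4 (N : ℕ) (hN : 1 ≤ N) (C : Matrix (Fin N ⊕ Fin N) (Fin N ⊕ Fin N) ℝ)
    (hC : C.PosDef) (hd : (dotPart C).PosDef) :
    (Gamma C hd).charpoly = (-(Gamma C hd)).charpoly := by
  rw [← conj_Gamma C hd, charpoly_conj_orth _ _ (J_mul_Jt N)]
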